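/- For every complex z with |z| < 1, the series sum over k≥1 of z^(2k)/((2k-1)(2k)(2k+1)) equals (1/2)ln(1-z²) + (1/2)(z + 1/z)·arctanh(z) - 1/2. -/

import Mathlib

noncomputable def carctanh (z : ℂ) : ℂ := (1 / 2) * Complex.log ((1 + z) / (1 - z))

open Complex in
lemma hasSum_carctanh {z : ℂ} (hz : ‖z‖ < 1) :
    HasSum (fun k : ℕ ↦ z ^ (2 * k + 1) / ((2 * k + 1 : ℕ) : ℂ)) (carctanh z) := by
  have haux := Complex.hasSum_arctan_aux (z := -z * I) (by simpa using hz)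
  have hzi : -z * I * I = z := by
    rw [mul_assoc, Complex.I_mul_I]; ring
  rw [hzi] at haux
  have H := ((hasSum_taylorSeries_log hz).add (hasSum_taylorSeries_neg_log hz)).mul_left (1 / 2)
  rw [haux] at H
  simp_rw [← add_div, ← add_one_mul] at H
  have key : (carctanh z) = 1 / 2 * Complex.log ((1 + z) / (1 - z)) := rfl
  rw [← key] at H
  -- H : HasSum (fun n ↦ 1/2 * (((-1)^(n+1) + 1) * z ^ n / n)) (carctanh z)
  have hinj : Function.Injective (fun k : ℕ => 2 * k + 1) := by
    intro a b hab
    simp only at hab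
    omega
  have hvan : ∀ n ∉ Set.range (fun k : ℕ => 2 * k + 1),
      (1 / 2 : ℂ) * (((-1) ^ (n + 1) + 1) * z ^ n / n) = 0 := by
    intro n hn
    have hne : Even n := by
      rcases Nat.even_or_odd n with he | ho
      · exact he
      · exfalso
        obtain ⟨k, hk⟩ := ho
        exact hn ⟨k, by simp only []; omega⟩
    have hpow : ((-1 : ℂ)) ^ (n + 1) = -1 := Odd.neg_one_pow (by simpa using hne.add_one)
    simp [hpow]
  refine ((hinj.hasSum_iff hvan).mpr H).congr_fun fun k => ?_
  have hpow : ((-1 : ℂ)) ^ (2 * k + 1 + 1) = 1 :=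
    Even.neg_one_pow ⟨k + 1, by ring⟩
  simp only [Function.comp, hpow]
  push_cast
  ring

theorem stmt_6 (z : ℂ) (hz : z ≠ 0) (h : ‖z‖ < 1) :
    ∑' k : ℕ, z ^ (2 * k + 2) / ((2 * (k : ℂ) + 1) * (2 * k + 2) * (2 * k + 3)) =
      (1 / 2) * Complex.log (1 - z ^ 2) + (1 / 2) * (z + 1 / z) * carctanh z - 1 / 2 := by
  have hn : ‖z‖ < 1 := by simpa using h
  set A := carctanh z with hA
  -- odd series
  have HA := hasSum_carctanh hn
  -- Hodd1 : sum z^(2k+2)/(2k+1) = z * A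
  have Hodd1 : HasSum (fun k : ℕ ↦ z ^ (2 * k + 2) / ((2 * k + 1 : ℕ) : ℂ)) (z * A) := by
    refine (HA.mul_left z).congr_fun fun k => ?_
    rw [mul_div_assoc', pow_succ]
    ring_nf
  -- Hodd3 : sum z^(2k+2)/(2k+3) = (A - z) / z
  have Hshift : HasSum (fun k : ℕ ↦ z ^ (2 * (k + 1) + 1) / ((2 * (k + 1) + 1 : ℕ) : ℂ))
      (A - z) := by
    have := (hasSum_nat_add_iff' (f := fun k : ℕ ↦ z ^ (2 * k + 1) / ((2 * k + 1 : ℕ) : ℂ)) 1).mpr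
      HA
    simpa using this
  have Hodd3 : HasSum (fun k : ℕ ↦ z ^ (2 * k + 2) / ((2 * k + 3 : ℕ) : ℂ))
      (z⁻¹ * (A - z)) := by
    refine (Hshift.mul_left z⁻¹).congr_fun fun k => ?_
    have h1 : 2 * (k + 1) + 1 = 2 * k + 3 := by ring
    rw [h1, show z ^ (2 * k + 3) = z * z ^ (2 * k + 2) from by ring,
      mul_div_assoc', ← mul_assoc, inv_mul_cancel₀ hz, one_mul]
  -- even series
  have Heven : HasSum (fun k : ℕ ↦ (1 / 2 : ℂ) * ((z ^ 2) ^ (k + 1) / ((k + 1 : ℕ) : ℂ)))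
      ((1 / 2) * (-Complex.log (1 - z ^ 2))) := by
    have hz2 : ‖z ^ 2‖ < 1 := by
      rw [norm_pow]
      exact pow_lt_one₀ (norm_nonneg z) hn (by norm_num)
    have H2 := Complex.hasSum_taylorSeries_neg_log hz2
    have H3 := (hasSum_nat_add_iff' (f := fun n : ℕ ↦ (z ^ 2) ^ n / (n : ℂ)) 1).mpr H2
    simp only [Finset.range_one, Finset.sum_singleton, pow_zero, Nat.cast_zero, div_zero,
      sub_zero] at H3
    exact H3.mul_left (1 / 2)
  -- combine
  have Htot := ((Hodd1.mul_left (1 / 2)).sub Heven).add (Hodd3.mul_left (1 / 2))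
  have hterm : ∀ k : ℕ,
      1 / 2 * (z ^ (2 * k + 2) / ((2 * k + 1 : ℕ) : ℂ)) -
          1 / 2 * ((z ^ 2) ^ (k + 1) / ((k + 1 : ℕ) : ℂ)) +
        1 / 2 * (z ^ (2 * k + 2) / ((2 * k + 3 : ℕ) : ℂ)) =
      z ^ (2 * k + 2) / ((2 * (k : ℂ) + 1) * (2 * k + 2) * (2 * k + 3)) := by
    intro k
    have e1 : ((2 * k + 1 : ℕ) : ℂ) = 2 * (k : ℂ) + 1 := by push_cast; ring
    have e2 : ((k + 1 : ℕ) : ℂ) = (k : ℂ) + 1 := by push_cast; ring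
    have e3 : ((2 * k + 3 : ℕ) : ℂ) = 2 * (k : ℂ) + 3 := by push_cast; ring
    have h1 : (2 * (k : ℂ) + 1) ≠ 0 := by
      rw [← e1]; exact Nat.cast_ne_zero.mpr (by omega)
    have h2 : ((k : ℂ) + 1) ≠ 0 := by
      rw [← e2]; exact Nat.cast_ne_zero.mpr (by omega)
    have h3 : (2 * (k : ℂ) + 3) ≠ 0 := by
      rw [← e3]; exact Nat.cast_ne_zero.mpr (by omega)
    have h4 : (2 * (k : ℂ) + 2) ≠ 0 := by
      have : (2 * (k : ℂ) + 2) = 2 * ((k : ℂ) + 1) := by ring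
      rw [this]; exact mul_ne_zero two_ne_zero h2
    have hp : (z ^ 2) ^ (k + 1) = z ^ (2 * k + 2) := by
      rw [← pow_mul]; ring_nf
    rw [e1, e2, e3, hp]
    field_simp
    ring
  have Hsum : HasSum
      (fun k : ℕ ↦ z ^ (2 * k + 2) / ((2 * (k : ℂ) + 1) * (2 * k + 2) * (2 * k + 3)))
      (1 / 2 * (z * A) - 1 / 2 * -Complex.log (1 - z ^ 2) + 1 / 2 * (z⁻¹ * (A - z))) := by
    refine Htot.congr_fun fun k => ?_
    rw [← hterm k]
  rw [Hsum.tsum_eq]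
  field_simp
  ring
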